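/- Suppose (f, w) is a point of the polytope Q such that f_i^{(α)} ∈ {0,1} for all i ∈ {1,…,n} and α ∈ R⁻, and let c ∈ Rⁿ be such that for all i and all α ∈ R⁻: f_i^{(α)} = 1 if and only if c_i = α. Then for every j ∈ J: X_j(c) ∈ E_j, w_{j,X_j(c)} = 1, and w_{j,S} = 0 for every S ∈ E_j with S ≠ X_j(c). -/
import Mathlib


open Finset

/-- The tuple of sets `X_j(c)`: for each symbol `α`, the set of positions `i` in the
support of the `j`-th row of `H` where `c i = α`. -/
def Xj {R : Type} [Ring R] [DecidableEq R] {n m : ℕ} (H : Fin m → Fin n → R) (j : Fin m)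
    (c : Fin n → R) : R → Finset (Fin n) :=
  fun α => univ.filter (fun i => H j i ≠ 0 ∧ c i = α)

/-- The set `E_j` of all tuples `X_j(c)` arising from words `c` satisfying parity check `j`. -/
def Ej {R : Type} [Ring R] [Fintype R] [DecidableEq R] {n m : ℕ} (H : Fin m → Fin n → R)
    (j : Fin m) : Finset (R → Finset (Fin n)) :=
  (univ.filter (fun c : Fin n → R => ∑ i, H j i * c i = 0)).image (Xj H j)

/-- Membership in the relaxed LP polytope `Q`. -/
def MemQ {R : Type} [Ring R] [Fintype R] [DecidableEq R] {n m : ℕ} (H : Fin m → Fin n → R)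
    (f : Fin n → R → ℝ) (w : Fin m → (R → Finset (Fin n)) → ℝ) : Prop :=
  (∀ j : Fin m, ∀ S ∈ Ej H j, 0 ≤ w j S ∧ w j S ≤ 1) ∧
  (∀ j : Fin m, ∑ S ∈ Ej H j, w j S = 1) ∧
  (∀ j : Fin m, ∀ i : Fin n, H j i ≠ 0 → ∀ α : R, α ≠ 0 →
    f i α = ∑ S ∈ (Ej H j).filter (fun S => i ∈ S α), w j S)

/-- LP pseudocodeword: nonnegative integer vectors `(h, z)` satisfying the defining equations. -/
def IsLPPseudocodeword {R : Type} [Ring R] [Fintype R] [DecidableEq R] {n m : ℕ}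
    (H : Fin m → Fin n → R) (h : Fin n → R → ℤ)
    (z : Fin m → (R → Finset (Fin n)) → ℤ) : Prop :=
  (∀ i α, 0 ≤ h i α) ∧
  (∀ j : Fin m, ∀ S ∈ Ej H j, 0 ≤ z j S) ∧
  (∀ j : Fin m, ∀ i : Fin n, H j i ≠ 0 →
    (∀ α : R, α ≠ 0 → h i α = ∑ S ∈ (Ej H j).filter (fun S => i ∈ S α), z j S) ∧
    h i 0 = ∑ S ∈ (Ej H j).filter (fun S => ∀ α : R, α ≠ 0 → i ∉ S α), z j S)

/-- The embedding of a word `c ∈ Rⁿ` as the point `(ξ(c₁) | … | ξ(c_n))`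
(indicator coordinates for the nonzero symbols). -/
def xiEmb {R : Type} [Zero R] [DecidableEq R] {n : ℕ} (c : Fin n → R) : Fin n → R → ℝ :=
  fun i α => if α ≠ 0 ∧ c i = α then 1 else 0

/-- The linear cost function `λ · fᵀ = ∑_i ∑_{α ∈ R⁻} λ_i^{(α)} f_i^{(α)}`. -/
def costQ {R : Type} [Zero R] [Fintype R] [DecidableEq R] {n : ℕ}
    (lam f : Fin n → R → ℝ) : ℝ :=
  ∑ i, ∑ α ∈ univ.filter (fun α : R => α ≠ 0), lam i α * f i α

/-- Connectedness of the Tanner graph of `H`: the bipartite graph on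
`{u_1,…,u_n} ∪ {v_1,…,v_m}` with `u_i ~ v_j` iff `H j i ≠ 0`. -/
def TannerConnected {R : Type} [Zero R] {n m : ℕ} (H : Fin m → Fin n → R) : Prop :=
  (SimpleGraph.fromRel (fun x y : Fin n ⊕ Fin m =>
      ∃ i j, x = Sum.inl i ∧ y = Sum.inr j ∧ H j i ≠ 0)).Connected

/-- Graph-cover pseudocodeword for the `M`-cover specified by permutations `σ`. -/
def IsGCPseudocodeword {R : Type} [Ring R] [DecidableEq R] {n m : ℕ}
    (H : Fin m → Fin n → R) (M : ℕ) (σ : Fin m → Fin n → Equiv.Perm (Fin M))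
    (p : Fin n → Fin M → R) : Prop :=
  ∀ (j : Fin m) (ℓ : Fin M),
    ∑ i ∈ univ.filter (fun i => H j i ≠ 0), H j i * p i (σ j i ℓ) = 0
/-- if `(f, w) ∈ Q` is `{0,1}`-valued and `c ∈ Rⁿ` satisfies
`f_i^{(α)} = 1 ↔ c_i = α` for all `α ∈ R⁻`, then for every `j`, `X_j(c) ∈ E_j`,
`w_{j,X_j(c)} = 1`, and `w_{j,S} = 0` for every other `S ∈ E_j`. -/
theorem stmt15 {R : Type} [Ring R] [Fintype R] [DecidableEq R] {n m : ℕ}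
    (H : Fin m → Fin n → R)
    (f : Fin n → R → ℝ) (w : Fin m → (R → Finset (Fin n)) → ℝ)
    (hQ : MemQ H f w)
    (h01 : ∀ i : Fin n, ∀ α : R, α ≠ 0 → f i α = 0 ∨ f i α = 1)
    (c : Fin n → R)
    (hc : ∀ i : Fin n, ∀ α : R, α ≠ 0 → (f i α = 1 ↔ c i = α)) :
    ∀ j : Fin m, Xj H j c ∈ Ej H j ∧ w j (Xj H j c) = 1 ∧
      ∀ S ∈ Ej H j, S ≠ Xj H j c → w j S = 0 := by
  obtain ⟨hw01, hwsum, hf⟩ := hQ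
  intro j
  have key : ∀ S ∈ Ej H j, 0 < w j S → S = Xj H j c := by
    intro S hS hpos
    obtain ⟨c', hc'mem, hXc'⟩ := Finset.mem_image.mp hS
    subst hXc'
    have equiv : ∀ i, H j i ≠ 0 → ∀ α : R, α ≠ 0 → (c' i = α ↔ c i = α) := by
      intro i hi α hα
      have hfe := hf j i hi α hα
      have hnonneg : ∀ S ∈ Ej H j, 0 ≤ w j S := fun S hS => (hw01 j S hS).1
      constructor
      · intro h
        have hmem : Xj H j c' ∈ (Ej H j).filter (fun S => i ∈ S α) :=
          Finset.mem_filter.mpr ⟨hS, by simp [Xj, hi, h]⟩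
        have hle : w j (Xj H j c') ≤ f i α := by
          rw [hfe]
          exact Finset.single_le_sum
            (fun S hS' => hnonneg S (Finset.mem_filter.mp hS').1) hmem
        have h1 : f i α = 1 := (h01 i α hα).resolve_left (by linarith)
        exact (hc i α hα).mp h1
      · intro h
        have hf1 : f i α = 1 := (hc i α hα).mpr h
        by_contra hnot
        have hnm : Xj H j c' ∉ (Ej H j).filter (fun S => i ∈ S α) := by
          simp [Xj, hnot]
        have hins : insert (Xj H j c') ((Ej H j).filter (fun S => i ∈ S α)) ⊆ Ej H j := by
          intro S hS'
          rcases Finset.mem_insert.mp hS' with h' | h'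
          · exact h' ▸ hS
          · exact (Finset.mem_filter.mp h').1
        have hsum : ∑ S ∈ insert (Xj H j c') ((Ej H j).filter (fun S => i ∈ S α)), w j S
            ≤ ∑ S ∈ Ej H j, w j S := by
          refine Finset.sum_le_sum_of_subset_of_nonneg hins ?_
          intro S hS' _
          exact hnonneg S hS'
        rw [Finset.sum_insert hnm, hwsum j] at hsum
        rw [← hfe, hf1] at hsum
        linarith
    funext α
    ext i
    simp only [Xj, Finset.mem_filter, Finset.mem_univ, true_and]
    constructor
    · rintro ⟨hi, hcα⟩
      refine ⟨hi, ?_⟩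
      by_cases hα : α = 0
      · subst hα
        by_contra hci
        have := (equiv i hi (c i) hci).mpr rfl
        rw [this] at hcα; exact hci hcα
      · exact (equiv i hi α hα).mp hcα
    · rintro ⟨hi, hcα⟩
      refine ⟨hi, ?_⟩
      by_cases hα : α = 0
      · subst hα
        by_contra hci
        have := (equiv i hi (c' i) hci).mp rfl
        rw [this] at hcα; exact hci hcα
      · exact (equiv i hi α hα).mpr hcα
  have hex : ∃ S ∈ Ej H j, w j S ≠ 0 := by
    apply Finset.exists_ne_zero_of_sum_ne_zero
    rw [hwsum j]; norm_num
  obtain ⟨S, hS, hSne⟩ := hex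
  have hSpos : 0 < w j S := lt_of_le_of_ne (hw01 j S hS).1 (Ne.symm hSne)
  have hSeq : S = Xj H j c := key S hS hSpos
  have hmemX : Xj H j c ∈ Ej H j := hSeq ▸ hS
  have hzero : ∀ S ∈ Ej H j, S ≠ Xj H j c → w j S = 0 := by
    intro S hS hne
    refine le_antisymm ?_ (hw01 j S hS).1
    by_contra hlt
    exact hne (key S hS (lt_of_not_ge hlt))
  refine ⟨hmemX, ?_, hzero⟩
  have := hwsum j
  rwa [Finset.sum_eq_single_of_mem _ hmemX (fun S hS hne => hzero S hS hne)] at this
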